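/- Let v : [0,π] → ℂ be continuous, α ∈ ℝ, and let λ ∈ ℂ satisfy λ ≠ 0, sin(λπ/2) ≠ 0, and Δ(α,λ) = 0. Define u(x) = ∫₀^x cos λ(π/2 − x + t) v(t) dt + ∫ₓ^π cos λ(π/2 − t + x) v(t) dt for x ∈ [0,π]. Then u is twice continuously differentiable on [0,π], u(0) = u(π), u'(0) = u'(π), and −u''(x) + α·(∫₀^π u(t) conj(v(t)) dt)·v(x) = λ²·u(x) for all x ∈ [0,π]. -/

import Mathlib

open MeasureTheory intervalIntegral

/-- Fourier transform `ṽ(λ) = ∫₀^π e^{-iλx} v(x) dx`. -/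
noncomputable def ftilde (v : ℝ → ℂ) (l : ℂ) : ℂ :=
  ∫ x in (0:ℝ)..Real.pi, Complex.exp (-Complex.I * l * x) * v x

/-- `Φ(λ) = ∫₀^π (∫₀^x e^{-iλ(x−t)} conj(v(t)) dt) v(x) dx`. -/
noncomputable def PhiFun (v : ℝ → ℂ) (l : ℂ) : ℂ :=
  ∫ x in (0:ℝ)..Real.pi,
    (∫ t in (0:ℝ)..x, Complex.exp (-Complex.I * l * (x - t)) * (starRingEnd ℂ) (v t)) * v x

/-- `Δ(0,λ) = 2(1 − cos πλ)`. -/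
noncomputable def Delta0 (l : ℂ) : ℂ := 2 * (1 - Complex.cos (Real.pi * l))

/-- `R(λ) = (1 − e^{-iλπ})(Φ(λ)(1 − e^{iλπ}) − ṽ(λ)ṽ*(λ))`. -/
noncomputable def Rfun (v : ℝ → ℂ) (l : ℂ) : ℂ :=
  (1 - Complex.exp (-Complex.I * l * Real.pi)) *
    (PhiFun v l * (1 - Complex.exp (Complex.I * l * Real.pi))
      - ftilde v l * (starRingEnd ℂ) (ftilde v ((starRingEnd ℂ) l)))

/-- `Δ(α,λ) = Δ(0,λ) + (α/(2iλ))(R(λ) − R(−λ))`. -/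
noncomputable def DeltaA (v : ℝ → ℂ) (α : ℝ) (l : ℂ) : ℂ :=
  Delta0 l + ((α : ℂ) / (2 * Complex.I * l)) * (Rfun v l - Rfun v (-l))

/-- The candidate eigenfunction
`u(x) = ∫₀^x cos λ(π/2 − x + t) v(t) dt + ∫ₓ^π cos λ(π/2 − t + x) v(t) dt`. -/
noncomputable def eigenFun (v : ℝ → ℂ) (l : ℂ) (x : ℝ) : ℂ :=
  (∫ t in (0:ℝ)..x, Complex.cos (l * ((Real.pi : ℂ) / 2 - x + t)) * v t)
    + ∫ t in x..Real.pi, Complex.cos (l * ((Real.pi : ℂ) / 2 - t + x)) * v t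



/-- FTC helper -/
lemma st6_ftc (h : ℝ → ℂ) (hh : Continuous h) (x : ℝ) :
    HasDerivAt (fun y => ∫ t in (0:ℝ)..y, h t) (h x) x :=
  intervalIntegral.integral_hasDerivAt_right (hh.intervalIntegrable _ _)
    (hh.stronglyMeasurableAtFilter _ _) hh.continuousAt

lemma st6_conjint {f : ℝ → ℂ} {a b : ℝ} :
    (∫ x in a..b, (starRingEnd ℂ) (f x)) = (starRingEnd ℂ) (∫ x in a..b, f x) := by
  simp [intervalIntegral, ← integral_conj]

noncomputable def st6CC (g : ℝ → ℂ) (l : ℂ) (x : ℝ) : ℂ := ∫ t in (0:ℝ)..x, Complex.cos (l * t) * g t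
noncomputable def st6SS (g : ℝ → ℂ) (l : ℂ) (x : ℝ) : ℂ := ∫ t in (0:ℝ)..x, Complex.sin (l * t) * g t

noncomputable def st6U (g : ℝ → ℂ) (l : ℂ) (x : ℝ) : ℂ :=
  Complex.cos (l * Real.pi / 2 - l * x) * st6CC g l x
    - Complex.sin (l * Real.pi / 2 - l * x) * st6SS g l x
    + Complex.cos (l * Real.pi / 2 + l * x) * (st6CC g l Real.pi - st6CC g l x)
    + Complex.sin (l * Real.pi / 2 + l * x) * (st6SS g l Real.pi - st6SS g l x)

noncomputable def st6U' (g : ℝ → ℂ) (l : ℂ) (x : ℝ) : ℂ :=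
  l * (Complex.sin (l * Real.pi / 2 - l * x) * st6CC g l x
    + Complex.cos (l * Real.pi / 2 - l * x) * st6SS g l x
    - Complex.sin (l * Real.pi / 2 + l * x) * (st6CC g l Real.pi - st6CC g l x)
    + Complex.cos (l * Real.pi / 2 + l * x) * (st6SS g l Real.pi - st6SS g l x))

noncomputable def st6U'' (g : ℝ → ℂ) (l : ℂ) (x : ℝ) : ℂ :=
  -l ^ 2 * st6U g l x + 2 * l * Complex.sin (l * Real.pi / 2) * g x

section derivs
variable {g : ℝ → ℂ} {l : ℂ}

lemma st6CC_hasDeriv (hg : Continuous g) (x : ℝ) : HasDerivAt (st6CC g l) (Complex.cos (l * x) * g x) x :=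
  st6_ftc _ (by fun_prop) x

lemma st6SS_hasDeriv (hg : Continuous g) (x : ℝ) : HasDerivAt (st6SS g l) (Complex.sin (l * x) * g x) x :=
  st6_ftc _ (by fun_prop) x

lemma st6_cos_sub_hasDeriv (a b : ℂ) (x : ℝ) :
    HasDerivAt (fun y : ℝ => Complex.cos (a - b * y)) (b * Complex.sin (a - b * x)) x := by
  have h : HasDerivAt (fun z : ℂ => Complex.cos (a - b * z)) (-Complex.sin (a - b * (x:ℂ)) * -(b * 1)) (x:ℂ) :=
    (((hasDerivAt_id (x:ℂ)).const_mul b).const_sub a).ccos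
  convert h.comp_ofReal using 1; ring

lemma st6_sin_sub_hasDeriv (a b : ℂ) (x : ℝ) :
    HasDerivAt (fun y : ℝ => Complex.sin (a - b * y)) (-b * Complex.cos (a - b * x)) x := by
  have h : HasDerivAt (fun z : ℂ => Complex.sin (a - b * z)) (Complex.cos (a - b * (x:ℂ)) * -(b * 1)) (x:ℂ) :=
    (((hasDerivAt_id (x:ℂ)).const_mul b).const_sub a).csin
  convert h.comp_ofReal using 1; ring

lemma st6_cos_add_hasDeriv (a b : ℂ) (x : ℝ) :
    HasDerivAt (fun y : ℝ => Complex.cos (a + b * y)) (-b * Complex.sin (a + b * x)) x := by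
  have h : HasDerivAt (fun z : ℂ => Complex.cos (a + b * z)) (-Complex.sin (a + b * (x:ℂ)) * (b * 1)) (x:ℂ) :=
    (((hasDerivAt_id (x:ℂ)).const_mul b).const_add a).ccos
  convert h.comp_ofReal using 1; ring

lemma st6_sin_add_hasDeriv (a b : ℂ) (x : ℝ) :
    HasDerivAt (fun y : ℝ => Complex.sin (a + b * y)) (b * Complex.cos (a + b * x)) x := by
  have h : HasDerivAt (fun z : ℂ => Complex.sin (a + b * z)) (Complex.cos (a + b * (x:ℂ)) * (b * 1)) (x:ℂ) :=
    (((hasDerivAt_id (x:ℂ)).const_mul b).const_add a).csin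
  convert h.comp_ofReal using 1; ring

lemma st6U_hasDeriv (hg : Continuous g) (x : ℝ) : HasDerivAt (st6U g l) (st6U' g l x) x := by
  have hCC := st6CC_hasDeriv (g := g) (l := l) hg
  have hSS := st6SS_hasDeriv (g := g) (l := l) hg
  have H := ((((st6_cos_sub_hasDeriv (l * Real.pi / 2) l x).mul (hCC x)).sub
      ((st6_sin_sub_hasDeriv (l * Real.pi / 2) l x).mul (hSS x))).add
      ((st6_cos_add_hasDeriv (l * Real.pi / 2) l x).mul ((hCC x).const_sub (st6CC g l Real.pi)))).add
      ((st6_sin_add_hasDeriv (l * Real.pi / 2) l x).mul ((hSS x).const_sub (st6SS g l Real.pi)))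
  have hfun : st6U g l = fun y : ℝ =>
      Complex.cos (l * Real.pi / 2 - l * y) * st6CC g l y
        - Complex.sin (l * Real.pi / 2 - l * y) * st6SS g l y
        + Complex.cos (l * Real.pi / 2 + l * y) * (st6CC g l Real.pi - st6CC g l y)
        + Complex.sin (l * Real.pi / 2 + l * y) * (st6SS g l Real.pi - st6SS g l y) := rfl
  rw [hfun]
  convert H using 1
  · rfl
  · rfl
  simp only [st6U', Complex.cos_sub, Complex.sin_sub, Complex.cos_add, Complex.sin_add]
  ring

lemma st6U'_hasDeriv (hg : Continuous g) (x : ℝ) : HasDerivAt (st6U' g l) (st6U'' g l x) x := by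
  have hCC := st6CC_hasDeriv (g := g) (l := l) hg
  have hSS := st6SS_hasDeriv (g := g) (l := l) hg
  have H := (((((st6_sin_sub_hasDeriv (l * Real.pi / 2) l x).mul (hCC x)).add
      ((st6_cos_sub_hasDeriv (l * Real.pi / 2) l x).mul (hSS x))).sub
      ((st6_sin_add_hasDeriv (l * Real.pi / 2) l x).mul ((hCC x).const_sub (st6CC g l Real.pi)))).add
      ((st6_cos_add_hasDeriv (l * Real.pi / 2) l x).mul ((hSS x).const_sub (st6SS g l Real.pi)))).const_mul l
  have hfun : st6U' g l = fun y : ℝ => l *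
      (Complex.sin (l * Real.pi / 2 - l * y) * st6CC g l y
        + Complex.cos (l * Real.pi / 2 - l * y) * st6SS g l y
        - Complex.sin (l * Real.pi / 2 + l * y) * (st6CC g l Real.pi - st6CC g l y)
        + Complex.cos (l * Real.pi / 2 + l * y) * (st6SS g l Real.pi - st6SS g l y)) := rfl
  rw [hfun]
  convert H using 1
  · rfl
  · rfl
  simp only [st6U'', st6U, Complex.cos_sub, Complex.sin_sub, Complex.cos_add, Complex.sin_add]
  linear_combination (-(2 * l * Complex.sin (l * Real.pi / 2) * g x)) *
    (Complex.sin_sq_add_cos_sq (l * (x:ℂ)))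
end derivs

lemma st6_conj_cont : Continuous (starRingEnd ℂ) := continuous_star




lemma tri_swap (f : ℝ → ℝ → ℂ) (hf : Continuous (Function.uncurry f)) {b : ℝ} (hb : 0 ≤ b) :
    (∫ x in (0:ℝ)..b, ∫ t in (0:ℝ)..x, f x t) = ∫ t in (0:ℝ)..b, ∫ x in t..b, f x t := by
  set F : ℝ → ℝ → ℂ := fun x t => Set.indicator (Set.Iic x) (f x) t with hF
  have hmeasF : StronglyMeasurable (Function.uncurry F) := by
    have : Function.uncurry F = Set.indicator {p : ℝ × ℝ | p.2 ≤ p.1} (Function.uncurry f) := by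
      ext p
      by_cases h : p.2 ≤ p.1 <;>
        simp [Function.uncurry, hF, Set.indicator, h]
    rw [this]
    exact hf.stronglyMeasurable.indicator (measurableSet_le measurable_snd measurable_fst)
  set μ := volume.restrict (Set.Ioc (0:ℝ) b) with hμ
  haveI : Fact (volume (Set.Ioc (0:ℝ) b) < ⊤) := ⟨measure_Ioc_lt_top⟩
  have hint : Integrable (Function.uncurry F) (μ.prod μ) := by
    constructor
    · exact hmeasF.aestronglyMeasurable
    · obtain ⟨C, hC⟩ := IsCompact.exists_bound_of_continuousOn
        (s := Set.Icc (0:ℝ) b ×ˢ Set.Icc (0:ℝ) b) (isCompact_Icc.prod isCompact_Icc)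
        hf.continuousOn
      apply HasFiniteIntegral.of_bounded (C := max C 0)
      rw [hμ, Measure.prod_restrict]
      filter_upwards [ae_restrict_mem (measurableSet_Ioc.prod measurableSet_Ioc)] with p hp
      rcases hp with ⟨hp1, hp2⟩
      by_cases h : p.2 ≤ p.1
      · have : ‖Function.uncurry f p‖ ≤ C := hC p ⟨Set.Ioc_subset_Icc_self hp1, Set.Ioc_subset_Icc_self hp2⟩
        simpa [Function.uncurry, hF, Set.indicator, h] using (Or.inl this : ‖Function.uncurry f p‖ ≤ C ∨ f p.1 p.2 = 0)
      · simp [Function.uncurry, hF, Set.indicator, h]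
  have hswap : (∫ x, ∫ t, F x t ∂μ ∂μ) = ∫ t, ∫ x, F x t ∂μ ∂μ :=
    integral_integral_swap hint
  have step1 : ∀ x ∈ Set.Icc (0:ℝ) b, (∫ t in (0:ℝ)..x, f x t) = ∫ t, F x t ∂μ := by
    intro x hx
    rw [hμ, setIntegral_indicator measurableSet_Iic]
    rw [show Set.Ioc 0 b ∩ Set.Iic x = Set.Ioc 0 x by
      ext t; simp only [Set.mem_inter_iff, Set.mem_Ioc, Set.mem_Iic]
      constructor
      · rintro ⟨⟨h1, h2⟩, h3⟩; exact ⟨h1, h3⟩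
      · rintro ⟨h1, h2⟩; exact ⟨⟨h1, h2.trans hx.2⟩, h2⟩]
    rw [intervalIntegral.integral_of_le hx.1]
  have step2 : ∀ t ∈ Set.Ioc (0:ℝ) b, (∫ x, F x t ∂μ) = ∫ x in t..b, f x t := by
    intro t ht
    have : (fun x => F x t) = Set.indicator (Set.Ici t) (fun x => f x t) := by
      ext x
      by_cases h : t ≤ x <;> simp [hF, Set.indicator, h]
    rw [this, hμ, setIntegral_indicator measurableSet_Ici]
    rw [show Set.Ioc 0 b ∩ Set.Ici t = Set.Icc t b by
      ext x; simp only [Set.mem_inter_iff, Set.mem_Ioc, Set.mem_Icc, Set.mem_Ici]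
      constructor
      · rintro ⟨⟨h1, h2⟩, h3⟩; exact ⟨h3, h2⟩
      · rintro ⟨h1, h2⟩; exact ⟨⟨ht.1.trans_le h1, h2⟩, h1⟩]
    rw [integral_Icc_eq_integral_Ioc, intervalIntegral.integral_of_le ht.2]
  rw [intervalIntegral.integral_of_le hb, intervalIntegral.integral_of_le hb]
  calc ∫ x in Set.Ioc (0:ℝ) b, ∫ t in (0:ℝ)..x, f x t
      = ∫ x, ∫ t, F x t ∂μ ∂μ := by
        rw [hμ]; exact setIntegral_congr_fun measurableSet_Ioc
          (fun x hx => step1 x (Set.Ioc_subset_Icc_self hx))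
    _ = ∫ t, ∫ x, F x t ∂μ ∂μ := hswap
    _ = ∫ t in Set.Ioc (0:ℝ) b, ∫ x in t..b, f x t := by
        rw [hμ]; exact setIntegral_congr_fun measurableSet_Ioc step2

noncomputable def st6P (g : ℝ → ℂ) (m : ℂ) (x : ℝ) : ℂ :=
  ∫ t in (0:ℝ)..x, Complex.exp (-Complex.I * m * t) * g t

lemma st6P_def (g : ℝ → ℂ) (m : ℂ) (x : ℝ) :
    st6P g m x = ∫ t in (0:ℝ)..x, Complex.exp (-Complex.I * m * t) * g t := rfl

lemma st6P_hasDeriv {g : ℝ → ℂ} (hg : Continuous g) (m : ℂ) (x : ℝ) :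
    HasDerivAt (st6P g m) (Complex.exp (-Complex.I * m * x) * g x) x :=
  st6_ftc _ (by fun_prop) x

lemma st6P_cont {g : ℝ → ℂ} (hg : Continuous g) (m : ℂ) : Continuous (st6P g m) :=
  continuous_iff_continuousAt.2 fun x => (st6P_hasDeriv hg m x).continuousAt

lemma st6E_int {g : ℝ → ℂ} (hg : Continuous g) (m : ℂ) (a b : ℝ) :
    IntervalIntegrable (fun t : ℝ => Complex.exp (-Complex.I * m * t) * g t) volume a b :=
  (by fun_prop : Continuous fun t : ℝ => Complex.exp (-Complex.I * m * t) * g t).intervalIntegrable _ _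

noncomputable def st6Q (g : ℝ → ℂ) (m : ℂ) : ℂ :=
  ∫ x in (0:ℝ)..Real.pi, st6P g m x * Complex.exp (Complex.I * m * x) * (starRingEnd ℂ) (g x)

noncomputable def st6B (g : ℝ → ℂ) (m : ℂ) : ℂ :=
  ∫ x in (0:ℝ)..Real.pi,
    (st6P g m Real.pi - st6P g m x) * Complex.exp (Complex.I * m * x) * (starRingEnd ℂ) (g x)

lemma st6Q_int {g : ℝ → ℂ} (hg : Continuous g) (m : ℂ) :
    IntervalIntegrable (fun x : ℝ =>
      st6P g m x * Complex.exp (Complex.I * m * x) * (starRingEnd ℂ) (g x)) volume 0 Real.pi := by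
  have h := st6_conj_cont.comp hg
  have hP := st6P_cont hg m
  exact (((hP.mul (by fun_prop)).mul h)).intervalIntegrable _ _

lemma st6B_int {g : ℝ → ℂ} (hg : Continuous g) (m : ℂ) :
    IntervalIntegrable (fun x : ℝ =>
      (st6P g m Real.pi - st6P g m x) * Complex.exp (Complex.I * m * x) * (starRingEnd ℂ) (g x))
      volume 0 Real.pi := by
  have h := st6_conj_cont.comp hg
  have hP := st6P_cont hg m
  exact ((((continuous_const.sub hP).mul (by fun_prop)).mul h)).intervalIntegrable _ _

/-- `S(m) = Q(m) + B(m)` -/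
lemma st6_S_eq {g : ℝ → ℂ} (hg : Continuous g) (m : ℂ) :
    ftilde g m * (starRingEnd ℂ) (ftilde g ((starRingEnd ℂ) m)) = st6Q g m + st6B g m := by
  have h1 : (starRingEnd ℂ) (ftilde g ((starRingEnd ℂ) m))
      = ∫ x in (0:ℝ)..Real.pi, Complex.exp (Complex.I * m * x) * (starRingEnd ℂ) (g x) := by
    rw [ftilde, ← st6_conjint]
    refine intervalIntegral.integral_congr fun x _ => ?_
    simp only [map_mul, map_neg, Complex.conj_I, Complex.conj_conj, Complex.conj_ofReal,
      ← Complex.exp_conj]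
    ring_nf
  have h2 : ftilde g m = st6P g m Real.pi := rfl
  rw [h1, h2, ← intervalIntegral.integral_const_mul, st6Q, st6B,
    ← intervalIntegral.integral_add (st6Q_int hg m) (st6B_int hg m)]
  exact intervalIntegral.integral_congr fun x _ => by ring

/-- `Φ(m) = B(m)` via Fubini on the triangle -/
lemma st6_Phi_eq_B {g : ℝ → ℂ} (hg : Continuous g) (m : ℂ) : PhiFun g m = st6B g m := by
  have hconj := st6_conj_cont.comp hg
  have hfc : Continuous (Function.uncurry fun x t : ℝ =>
      Complex.exp (-Complex.I * m * ((x:ℂ) - (t:ℂ))) * (starRingEnd ℂ) (g t) * g x) := by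
    apply Continuous.mul
    apply Continuous.mul
    · exact Complex.continuous_exp.comp (continuous_const.mul
        ((Complex.continuous_ofReal.comp continuous_fst).sub
          (Complex.continuous_ofReal.comp continuous_snd)))
    · exact hconj.comp continuous_snd
    · exact hg.comp continuous_fst
  have h0 : PhiFun g m = ∫ x in (0:ℝ)..Real.pi, ∫ t in (0:ℝ)..x,
      Complex.exp (-Complex.I * m * ((x:ℂ) - (t:ℂ))) * (starRingEnd ℂ) (g t) * g x := by
    refine intervalIntegral.integral_congr fun x _ => ?_
    exact (intervalIntegral.integral_mul_const _ _).symm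
  rw [h0, tri_swap _ hfc Real.pi_pos.le, st6B]
  refine intervalIntegral.integral_congr fun t _ => ?_
  have h1 : (fun x : ℝ => Complex.exp (-Complex.I * m * ((x:ℂ) - (t:ℂ))) * (starRingEnd ℂ) (g t) * g x)
      = fun x : ℝ => (Complex.exp (-Complex.I * m * x) * g x)
          * (Complex.exp (Complex.I * m * t) * (starRingEnd ℂ) (g t)) := by
    funext x
    rw [show -Complex.I * m * ((x:ℂ) - (t:ℂ))
        = (-Complex.I * m * x) + (Complex.I * m * t) by ring, Complex.exp_add]
    ring
  rw [h1, intervalIntegral.integral_mul_const,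
    ← intervalIntegral.integral_interval_sub_left (st6E_int hg m 0 Real.pi) (st6E_int hg m 0 t),
    ← st6P_def, ← st6P_def]
  ring

lemma st6_eigen_eq {g : ℝ → ℂ} (hg : Continuous g) (l : ℂ) (x : ℝ) :
    eigenFun g l x = st6U g l x := by
  have hcc : IntervalIntegrable (fun t : ℝ => Complex.cos (l * t) * g t) volume 0 x :=
    (by fun_prop : Continuous fun t : ℝ => Complex.cos (l * t) * g t).intervalIntegrable _ _
  have hss : IntervalIntegrable (fun t : ℝ => Complex.sin (l * t) * g t) volume 0 x :=
    (by fun_prop : Continuous fun t : ℝ => Complex.sin (l * t) * g t).intervalIntegrable _ _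
  have hccp : IntervalIntegrable (fun t : ℝ => Complex.cos (l * t) * g t) volume 0 Real.pi :=
    (by fun_prop : Continuous fun t : ℝ => Complex.cos (l * t) * g t).intervalIntegrable _ _
  have hssp : IntervalIntegrable (fun t : ℝ => Complex.sin (l * t) * g t) volume 0 Real.pi :=
    (by fun_prop : Continuous fun t : ℝ => Complex.sin (l * t) * g t).intervalIntegrable _ _
  have h1 : (∫ t in (0:ℝ)..x, Complex.cos (l * ((Real.pi : ℂ) / 2 - x + t)) * g t)
      = Complex.cos (l * Real.pi / 2 - l * x) * st6CC g l x
        - Complex.sin (l * Real.pi / 2 - l * x) * st6SS g l x := by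
    rw [show (fun t : ℝ => Complex.cos (l * ((Real.pi : ℂ) / 2 - x + t)) * g t)
        = fun t : ℝ => Complex.cos (l * Real.pi / 2 - l * x) * (Complex.cos (l * t) * g t)
            - Complex.sin (l * Real.pi / 2 - l * x) * (Complex.sin (l * t) * g t) from
      funext fun t => by
        rw [show l * ((Real.pi : ℂ) / 2 - x + t) = (l * Real.pi / 2 - l * x) + l * t by ring,
          Complex.cos_add]
        ring]
    rw [intervalIntegral.integral_sub (hcc.const_mul _) (hss.const_mul _),
      intervalIntegral.integral_const_mul, intervalIntegral.integral_const_mul]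
    rfl
  have h2 : (∫ t in x..Real.pi, Complex.cos (l * ((Real.pi : ℂ) / 2 - t + x)) * g t)
      = Complex.cos (l * Real.pi / 2 + l * x) * (st6CC g l Real.pi - st6CC g l x)
        + Complex.sin (l * Real.pi / 2 + l * x) * (st6SS g l Real.pi - st6SS g l x) := by
    rw [show (fun t : ℝ => Complex.cos (l * ((Real.pi : ℂ) / 2 - t + x)) * g t)
        = fun t : ℝ => Complex.cos (l * Real.pi / 2 + l * x) * (Complex.cos (l * t) * g t)
            + Complex.sin (l * Real.pi / 2 + l * x) * (Complex.sin (l * t) * g t) from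
      funext fun t => by
        rw [show l * ((Real.pi : ℂ) / 2 - t + x) = (l * Real.pi / 2 + l * x) - l * t by ring,
          Complex.cos_sub]
        ring]
    have hcc2 : IntervalIntegrable (fun t : ℝ => Complex.cos (l * t) * g t) volume x Real.pi :=
      (by fun_prop : Continuous fun t : ℝ => Complex.cos (l * t) * g t).intervalIntegrable _ _
    have hss2 : IntervalIntegrable (fun t : ℝ => Complex.sin (l * t) * g t) volume x Real.pi :=
      (by fun_prop : Continuous fun t : ℝ => Complex.sin (l * t) * g t).intervalIntegrable _ _
    rw [intervalIntegral.integral_add (hcc2.const_mul _) (hss2.const_mul _),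
      intervalIntegral.integral_const_mul, intervalIntegral.integral_const_mul,
      ← intervalIntegral.integral_interval_sub_left hccp hcc,
      ← intervalIntegral.integral_interval_sub_left hssp hss]
    rfl
  rw [eigenFun, h1, h2, st6U]; ring


lemma st6_cos_exp (z : ℂ) :
    Complex.cos z = (Complex.exp (z * Complex.I) + Complex.exp (-z * Complex.I)) / 2 := by
  rw [Complex.exp_mul_I, Complex.exp_mul_I, Complex.cos_neg, Complex.sin_neg]
  ring

lemma st6_J_eq {g : ℝ → ℂ} (hg : Continuous g) (l : ℂ) :
    (∫ x in (0:ℝ)..Real.pi, eigenFun g l x * (starRingEnd ℂ) (g x))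
      = Complex.exp (l * Real.pi / 2 * Complex.I) / 2 * (st6Q g (-l) + st6B g l)
        + Complex.exp (-(l * Real.pi / 2) * Complex.I) / 2 * (st6Q g l + st6B g (-l)) := by
  have hconj := st6_conj_cont.comp hg
  set ep := Complex.exp (l * Real.pi / 2 * Complex.I) with hep
  set em := Complex.exp (-(l * Real.pi / 2) * Complex.I) with hem
  have ha : ∀ x : ℝ, (∫ t in (0:ℝ)..x, Complex.cos (l * ((Real.pi : ℂ) / 2 - x + t)) * g t)
      = ep / 2 * (st6P g (-l) x * Complex.exp (Complex.I * (-l) * x))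
        + em / 2 * (st6P g l x * Complex.exp (Complex.I * l * x)) := by
    intro x
    have hpt : ∀ t : ℝ, Complex.cos (l * ((Real.pi : ℂ) / 2 - x + t)) * g t
        = ep / 2 * Complex.exp (Complex.I * (-l) * x) * (Complex.exp (-Complex.I * (-l) * t) * g t)
          + em / 2 * Complex.exp (Complex.I * l * x) * (Complex.exp (-Complex.I * l * t) * g t) := by
      intro t
      rw [st6_cos_exp]
      have e1 : Complex.exp ((l * ((Real.pi : ℂ) / 2 - x + t)) * Complex.I)
          = ep * (Complex.exp (Complex.I * (-l) * x) * Complex.exp (-Complex.I * (-l) * t)) := by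
        rw [hep, ← Complex.exp_add, ← Complex.exp_add]; congr 1; ring
      have e2 : Complex.exp (-(l * ((Real.pi : ℂ) / 2 - x + t)) * Complex.I)
          = em * (Complex.exp (Complex.I * l * x) * Complex.exp (-Complex.I * l * t)) := by
        rw [hem, ← Complex.exp_add, ← Complex.exp_add]; congr 1; ring
      rw [e1, e2]; ring
    calc (∫ t in (0:ℝ)..x, Complex.cos (l * ((Real.pi : ℂ) / 2 - x + t)) * g t)
        = ∫ t in (0:ℝ)..x,
            (ep / 2 * Complex.exp (Complex.I * (-l) * x) * (Complex.exp (-Complex.I * (-l) * t) * g t)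
              + em / 2 * Complex.exp (Complex.I * l * x) * (Complex.exp (-Complex.I * l * t) * g t)) :=
          intervalIntegral.integral_congr fun t _ => hpt t
      _ = ep / 2 * (st6P g (-l) x * Complex.exp (Complex.I * (-l) * x))
            + em / 2 * (st6P g l x * Complex.exp (Complex.I * l * x)) := by
          rw [intervalIntegral.integral_add ((st6E_int hg (-l) 0 x).const_mul _)
              ((st6E_int hg l 0 x).const_mul _),
            intervalIntegral.integral_const_mul, intervalIntegral.integral_const_mul,
            ← st6P_def, ← st6P_def]
          ring
  have hb : ∀ x : ℝ, (∫ t in x..Real.pi, Complex.cos (l * ((Real.pi : ℂ) / 2 - t + x)) * g t)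
      = ep / 2 * ((st6P g l Real.pi - st6P g l x) * Complex.exp (Complex.I * l * x))
        + em / 2 * ((st6P g (-l) Real.pi - st6P g (-l) x) * Complex.exp (Complex.I * (-l) * x)) := by
    intro x
    have hpt : ∀ t : ℝ, Complex.cos (l * ((Real.pi : ℂ) / 2 - t + x)) * g t
        = ep / 2 * Complex.exp (Complex.I * l * x) * (Complex.exp (-Complex.I * l * t) * g t)
          + em / 2 * Complex.exp (Complex.I * (-l) * x) * (Complex.exp (-Complex.I * (-l) * t) * g t) := by
      intro t
      rw [st6_cos_exp]
      have e1 : Complex.exp ((l * ((Real.pi : ℂ) / 2 - t + x)) * Complex.I)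
          = ep * (Complex.exp (Complex.I * l * x) * Complex.exp (-Complex.I * l * t)) := by
        rw [hep, ← Complex.exp_add, ← Complex.exp_add]; congr 1; ring
      have e2 : Complex.exp (-(l * ((Real.pi : ℂ) / 2 - t + x)) * Complex.I)
          = em * (Complex.exp (Complex.I * (-l) * x) * Complex.exp (-Complex.I * (-l) * t)) := by
        rw [hem, ← Complex.exp_add, ← Complex.exp_add]; congr 1; ring
      rw [e1, e2]; ring
    calc (∫ t in x..Real.pi, Complex.cos (l * ((Real.pi : ℂ) / 2 - t + x)) * g t)
        = ∫ t in x..Real.pi,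
            (ep / 2 * Complex.exp (Complex.I * l * x) * (Complex.exp (-Complex.I * l * t) * g t)
              + em / 2 * Complex.exp (Complex.I * (-l) * x) * (Complex.exp (-Complex.I * (-l) * t) * g t)) :=
          intervalIntegral.integral_congr fun t _ => hpt t
      _ = ep / 2 * ((st6P g l Real.pi - st6P g l x) * Complex.exp (Complex.I * l * x))
            + em / 2 * ((st6P g (-l) Real.pi - st6P g (-l) x) * Complex.exp (Complex.I * (-l) * x)) := by
          rw [intervalIntegral.integral_add ((st6E_int hg l x Real.pi).const_mul _)
              ((st6E_int hg (-l) x Real.pi).const_mul _),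
            intervalIntegral.integral_const_mul, intervalIntegral.integral_const_mul,
            ← intervalIntegral.integral_interval_sub_left (st6E_int hg l 0 Real.pi) (st6E_int hg l 0 x),
            ← intervalIntegral.integral_interval_sub_left (st6E_int hg (-l) 0 Real.pi) (st6E_int hg (-l) 0 x),
            ← st6P_def, ← st6P_def, ← st6P_def, ← st6P_def]
          ring
  calc (∫ x in (0:ℝ)..Real.pi, eigenFun g l x * (starRingEnd ℂ) (g x))
      = ∫ x in (0:ℝ)..Real.pi,
          (ep / 2 * (st6P g (-l) x * Complex.exp (Complex.I * (-l) * x) * (starRingEnd ℂ) (g x))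
            + em / 2 * (st6P g l x * Complex.exp (Complex.I * l * x) * (starRingEnd ℂ) (g x))
            + (ep / 2 * ((st6P g l Real.pi - st6P g l x) * Complex.exp (Complex.I * l * x) * (starRingEnd ℂ) (g x))
            + em / 2 * ((st6P g (-l) Real.pi - st6P g (-l) x) * Complex.exp (Complex.I * (-l) * x) * (starRingEnd ℂ) (g x)))) := by
        refine intervalIntegral.integral_congr fun x _ => ?_
        rw [eigenFun, ha x, hb x]; ring
    _ = ep / 2 * (st6Q g (-l) + st6B g l) + em / 2 * (st6Q g l + st6B g (-l)) := by
        rw [intervalIntegral.integral_add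
            (((st6Q_int hg (-l)).const_mul _).add ((st6Q_int hg l).const_mul _))
            (((st6B_int hg l).const_mul _).add ((st6B_int hg (-l)).const_mul _)),
          intervalIntegral.integral_add ((st6Q_int hg (-l)).const_mul _) ((st6Q_int hg l).const_mul _),
          intervalIntegral.integral_add ((st6B_int hg l).const_mul _) ((st6B_int hg (-l)).const_mul _),
          intervalIntegral.integral_const_mul, intervalIntegral.integral_const_mul,
          intervalIntegral.integral_const_mul, intervalIntegral.integral_const_mul]
        rw [st6Q, st6Q, st6B, st6B]
        ring

lemma st6_key {g : ℝ → ℂ} (hg : Continuous g) (l : ℂ) :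
    Rfun g l - Rfun g (-l) = -4 * Complex.I * Complex.sin (l * Real.pi / 2) *
      ∫ x in (0:ℝ)..Real.pi, eigenFun g l x * (starRingEnd ℂ) (g x) := by
  set ep := Complex.exp (l * Real.pi / 2 * Complex.I) with hep
  set em := Complex.exp (-(l * Real.pi / 2) * Complex.I) with hem
  have hpp : Complex.exp (Complex.I * l * (Real.pi:ℝ)) = ep * ep := by
    rw [hep, ← Complex.exp_add]; congr 1; ring
  have hmm : Complex.exp (-Complex.I * l * (Real.pi:ℝ)) = em * em := by
    rw [hem, ← Complex.exp_add]; congr 1; ring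
  have hpp' : Complex.exp (Complex.I * -l * (Real.pi:ℝ)) = em * em := by
    rw [hem, ← Complex.exp_add]; congr 1; ring
  have hmm' : Complex.exp (-Complex.I * -l * (Real.pi:ℝ)) = ep * ep := by
    rw [hep, ← Complex.exp_add]; congr 1; ring
  have he : ep * em = 1 := by
    rw [hep, hem, ← Complex.exp_add, show l * (Real.pi:ℝ) / 2 * Complex.I + -(l * (Real.pi:ℝ) / 2) * Complex.I = 0 by ring,
      Complex.exp_zero]
  have hs2 : ep - em = 2 * Complex.I * Complex.sin (l * Real.pi / 2) := by
    rw [hep, hem, Complex.exp_mul_I, Complex.exp_mul_I, Complex.cos_neg, Complex.sin_neg]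
    ring
  rw [Rfun, Rfun, st6_Phi_eq_B hg l, st6_Phi_eq_B hg (-l), st6_S_eq hg l, st6_S_eq hg (-l),
    hpp, hmm, hpp', hmm', st6_J_eq hg l]
  linear_combination (ep * em * st6B g l + st6Q g l - ep * em * st6B g (-l) - st6Q g (-l)) * he
    - (ep * (st6Q g (-l) + st6B g l) + em * (st6Q g l + st6B g (-l))) * hs2


section congrs
variable {v g : ℝ → ℂ} (hvg : Set.EqOn v g (Set.Icc 0 Real.pi))
include hvg

lemma st6_ftilde_congr (m : ℂ) : ftilde v m = ftilde g m := by
  refine intervalIntegral.integral_congr fun x hx => ?_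
  rw [Set.uIcc_of_le Real.pi_pos.le] at hx
  rw [hvg hx]

lemma st6_Phi_congr (m : ℂ) : PhiFun v m = PhiFun g m := by
  refine intervalIntegral.integral_congr fun x hx => ?_
  rw [Set.uIcc_of_le Real.pi_pos.le] at hx
  rw [hvg hx]
  congr 1
  refine intervalIntegral.integral_congr fun t ht => ?_
  rw [Set.uIcc_of_le hx.1] at ht
  rw [hvg ⟨ht.1, ht.2.trans hx.2⟩]

lemma st6_Rfun_congr (m : ℂ) : Rfun v m = Rfun g m := by
  rw [Rfun, Rfun, st6_Phi_congr hvg m, st6_ftilde_congr hvg m,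
    st6_ftilde_congr hvg ((starRingEnd ℂ) m)]

lemma st6_eigen_congr (l : ℂ) (x : ℝ) (hx : x ∈ Set.Icc 0 Real.pi) :
    eigenFun v l x = eigenFun g l x := by
  rw [eigenFun, eigenFun]
  congr 1
  · refine intervalIntegral.integral_congr fun t ht => ?_
    rw [Set.uIcc_of_le hx.1] at ht
    rw [hvg ⟨ht.1, ht.2.trans hx.2⟩]
  · refine intervalIntegral.integral_congr fun t ht => ?_
    rw [Set.uIcc_of_le hx.2] at ht
    rw [hvg ⟨hx.1.trans ht.1, ht.2⟩]

end congrs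



theorem stmt6 (v : ℝ → ℂ) (hv : ContinuousOn v (Set.Icc 0 Real.pi))
    (α : ℝ) (l : ℂ) (hl : l ≠ 0)
    (hs : Complex.sin (l * Real.pi / 2) ≠ 0)
    (hroot : DeltaA v α l = 0) :
    ∃ u' u'' : ℝ → ℂ,
      (∀ x ∈ Set.Icc (0:ℝ) Real.pi,
        HasDerivWithinAt (eigenFun v l) (u' x) (Set.Icc 0 Real.pi) x) ∧
      (∀ x ∈ Set.Icc (0:ℝ) Real.pi,
        HasDerivWithinAt u' (u'' x) (Set.Icc 0 Real.pi) x) ∧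
      ContinuousOn u'' (Set.Icc 0 Real.pi) ∧
      eigenFun v l 0 = eigenFun v l Real.pi ∧
      u' 0 = u' Real.pi ∧
      ∀ x ∈ Set.Icc (0:ℝ) Real.pi,
        -u'' x + (α : ℂ) * (∫ t in (0:ℝ)..Real.pi, eigenFun v l t * (starRingEnd ℂ) (v t)) * v x
          = l ^ 2 * eigenFun v l x := by
  set g : ℝ → ℂ := Set.IccExtend Real.pi_pos.le ((Set.Icc 0 Real.pi).restrict v) with hgdef
  have hg : Continuous g := hv.restrict.Icc_extend'
  have hvg : Set.EqOn v g (Set.Icc 0 Real.pi) :=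
    fun x hx => (Set.IccExtend_of_mem Real.pi_pos.le ((Set.Icc 0 Real.pi).restrict v) hx).symm
  set J := ∫ x in (0:ℝ)..Real.pi, eigenFun g l x * (starRingEnd ℂ) (g x) with hJ
  have hscal : (α:ℂ) * J = 2 * l * Complex.sin (l * Real.pi / 2) := by
    have h : Delta0 l + ((α : ℂ) / (2 * Complex.I * l)) * (Rfun g l - Rfun g (-l)) = 0 := by
      rw [← st6_Rfun_congr hvg l, ← st6_Rfun_congr hvg (-l)]
      exact hroot
    rw [st6_key hg l, ← hJ, Delta0] at h
    have hcos2 : Complex.cos ((Real.pi:ℂ) * l) = 2 * Complex.cos (l * Real.pi / 2) ^ 2 - 1 := by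
      rw [show ((Real.pi:ℂ) * l) = 2 * (l * (Real.pi:ℝ) / 2) by ring, Complex.cos_two_mul]
    rw [hcos2] at h
    have hpy := Complex.sin_sq_add_cos_sq (l * (Real.pi:ℝ) / 2)
    field_simp at h
    have hfac : Complex.sin (l * Real.pi / 2) *
        ((α:ℂ) * J - 2 * l * Complex.sin (l * Real.pi / 2)) = 0 := by
      linear_combination (-1/4 : ℂ) * h + (-(2*l)) * hpy
    rcases mul_eq_zero.1 hfac with h1 | h2
    · exact absurd h1 hs
    · linear_combination h2
  have h0mem : (0:ℝ) ∈ Set.Icc (0:ℝ) Real.pi := ⟨le_refl _, Real.pi_pos.le⟩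
  have hπmem : Real.pi ∈ Set.Icc (0:ℝ) Real.pi := ⟨Real.pi_pos.le, le_refl _⟩
  have h0c : st6CC g l 0 = 0 := intervalIntegral.integral_same
  have h0s : st6SS g l 0 = 0 := intervalIntegral.integral_same
  refine ⟨st6U' g l, st6U'' g l, ?_, ?_, ?_, ?_, ?_, ?_⟩
  · intro x hx
    exact ((st6U_hasDeriv hg x).hasDerivWithinAt).congr
      (fun y hy => by rw [st6_eigen_congr hvg l y hy, st6_eigen_eq hg l y])
      (by rw [st6_eigen_congr hvg l x hx, st6_eigen_eq hg l x])
  · exact fun x _ => (st6U'_hasDeriv hg x).hasDerivWithinAt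
  · have hUc : Continuous (st6U g l) :=
      continuous_iff_continuousAt.2 fun y => (st6U_hasDeriv hg y).continuousAt
    exact ((continuous_const.mul hUc).add (continuous_const.mul hg)).continuousOn
  · rw [st6_eigen_congr hvg l 0 h0mem, st6_eigen_congr hvg l Real.pi hπmem,
      st6_eigen_eq hg l 0, st6_eigen_eq hg l Real.pi]
    simp only [st6U, h0c, h0s, Complex.ofReal_zero, mul_zero, sub_zero, add_zero, sub_self]
    rw [show l * ((Real.pi:ℝ):ℂ) / 2 - l * ((Real.pi:ℝ):ℂ) = -(l * ((Real.pi:ℝ):ℂ) / 2) by ring,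
      Complex.cos_neg, Complex.sin_neg]
    ring
  · simp only [st6U', h0c, h0s, Complex.ofReal_zero, mul_zero, sub_zero, add_zero, sub_self]
    rw [show l * ((Real.pi:ℝ):ℂ) / 2 - l * ((Real.pi:ℝ):ℂ) = -(l * ((Real.pi:ℝ):ℂ) / 2) by ring,
      Complex.cos_neg, Complex.sin_neg]
    ring
  · intro x hx
    have hJv : (∫ t in (0:ℝ)..Real.pi, eigenFun v l t * (starRingEnd ℂ) (v t)) = J := by
      rw [hJ]
      refine intervalIntegral.integral_congr fun t ht => ?_
      rw [Set.uIcc_of_le Real.pi_pos.le] at ht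
      rw [st6_eigen_congr hvg l t ht, hvg ht]
    rw [hJv]
    have hE : eigenFun v l x = st6U g l x := by
      rw [st6_eigen_congr hvg l x hx, st6_eigen_eq hg l x]
    have hgx : g x = v x := (hvg hx).symm
    simp only [st6U'']
    rw [hE, hgx]
    linear_combination (v x) * hscal
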